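/- arXiv:1305.4186 — 5 statements merged into one kernel-verified Lean document; each statement's English description precedes it below -/
import Mathlib

section
/- Let F be a compact family of finite subsets of the natural numbers (compact in the product/pointwise topology on the power set of ℕ). Then for every infinite set N ⊆ ℕ there exists an infinite subset M ⊆ N such that the trace family F[M] = {F ∩ M : F ∈ F} is hereditary, i.e., if A ⊆ B and B ∈ F[M], then A ∈ F[M]. -/
open Set

namespace RosAux

variable (F : Set (ℕ → Bool))

/-- `t` is contained in some member of `F`. -/
def TT (t : Finset ℕ) : Prop := ∃ f ∈ F, ∀ x ∈ t, f x = true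

theorem TT_mono {F : Set (ℕ → Bool)} {s t : Finset ℕ} (h : s ⊆ t) (ht : TT F t) : TT F s := by
  obtain ⟨f, hf, hft⟩ := ht
  exact ⟨f, hf, fun x hx => hft x (h hx)⟩

/-- the recursion relation: `s` is an extendible proper extension of `t`. -/
def Rel (s t : Finset ℕ) : Prop := t ⊂ s ∧ TT F s

variable (U : Ultrafilter ℕ)

/-- Ultrafilter limits stay in the (compact) closed set `F`. -/
theorem ulim (hcl : IsClosed F) (f : ℕ → ℕ → Bool) (hf : ∀ m, f m ∈ F) :
    ∃ g ∈ F, ∀ x, {m | f m x = g x} ∈ U := by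
  have hco : IsCompact F := hcl.isCompact
  have hle : ↑(Ultrafilter.map f U) ≤ Filter.principal F := by
    rw [Filter.le_principal_iff]
    rw [Ultrafilter.coe_map, Filter.mem_map]
    have : (f ⁻¹' F) = Set.univ := by
      ext m; simp [hf m]
    rw [this]; exact Filter.univ_mem
  obtain ⟨g, hgF, hg⟩ := hco.ultrafilter_le_nhds (Ultrafilter.map f U) hle
  refine ⟨g, hgF, fun x => ?_⟩
  have hx : Filter.Tendsto (fun h : ℕ → Bool => h x) (nhds g) (nhds (g x)) :=
    (continuous_apply x).tendsto g
  have h2 : Filter.Tendsto (fun m => f m x) (U : Filter ℕ) (nhds (g x)) := by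
    refine hx.comp ?_
    rw [Filter.tendsto_iff_comap]
    calc (U : Filter ℕ) ≤ Filter.comap f (Ultrafilter.map f U) := by
            rw [Ultrafilter.coe_map]; exact Filter.le_comap_map
      _ ≤ Filter.comap f (nhds g) := Filter.comap_mono hg
  have h3 : {b : Bool | b = g x} ∈ nhds (g x) := by
    rw [mem_nhds_discrete]; rfl
  exact h2 h3

theorem relWF (hcl : IsClosed F) (hfin : ∀ f ∈ F, {n : ℕ | f n = true}.Finite)
    (hU : ∀ s : Set ℕ, s.Finite → sᶜ ∈ U) : WellFounded (Rel F) := by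
  by_contra hw
  have h1 : ∃ a, ¬ Acc (Rel F) a := by
    by_contra h
    push_neg at h
    exact hw ⟨h⟩
  obtain ⟨a, ha⟩ := h1
  have step : ∀ s, ¬ Acc (Rel F) s → ∃ s', Rel F s' s ∧ ¬ Acc (Rel F) s' := by
    intro s hs
    by_contra h
    push_neg at h
    exact hs (Acc.intro s fun y hy => h y hy)
  -- build a descending chain
  let c : ℕ → {s : Finset ℕ // ¬ Acc (Rel F) s} := fun n =>
    Nat.rec ⟨a, ha⟩ (fun _ p => ⟨(step p.1 p.2).choose, (step p.1 p.2).choose_spec.2⟩) n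
  have hrel : ∀ n, Rel F (c (n + 1)).1 (c n).1 := fun n => (step (c n).1 (c n).2).choose_spec.1
  have hmono : ∀ {i j : ℕ}, i ≤ j → (c i).1 ⊆ (c j).1 := by
    intro i j hij
    induction j with
    | zero => simpa [Nat.le_zero.mp hij] using Finset.Subset.refl _
    | succ j ih =>
      rcases Nat.lt_or_ge i (j + 1) with h | h
      · exact (ih (Nat.lt_succ_iff.mp h)).trans (hrel j).1.subset
      · have : i = j + 1 := le_antisymm hij h
        simp [this]
  -- witnesses
  have hTT : ∀ n, TT F (c (n + 1)).1 := fun n => (hrel n).2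
  have hfex : ∀ n, ∃ f ∈ F, ∀ x ∈ (c (n + 1)).1, f x = true := hTT
  obtain ⟨g, hgF, hg⟩ := ulim F U hcl (fun n => (hfex n).choose) (fun n => (hfex n).choose_spec.1)
  have hsub : ∀ n, ∀ x ∈ (c (n + 1)).1, g x = true := by
    intro n x hx
    have hV : {m | (hfex m).choose x = g x} ∈ U := hg x
    have hW : {m : ℕ | m < n}ᶜ ∈ U := hU _ (Set.finite_lt_nat n)
    obtain ⟨m, hm1, hm2⟩ := Ultrafilter.nonempty_of_mem (Filter.inter_mem hV hW)
    have hmn : n ≤ m := not_lt.mp hm2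
    have : x ∈ (c (m + 1)).1 := hmono (Nat.succ_le_succ hmn) hx
    have := (hfex m).choose_spec.2 x this
    rw [← hm1, this]
  have hcard : ∀ n : ℕ, n ≤ ((c n).1).card := by
    intro n
    induction n with
    | zero => exact Nat.zero_le _
    | succ n ih => exact Nat.succ_le_of_lt (lt_of_le_of_lt ih (Finset.card_lt_card (hrel n).1))
  have hgfin : {n : ℕ | g n = true}.Finite := hfin g hgF
  have hsubF : ((c (hgfin.toFinset.card + 2)).1 : Finset ℕ) ⊆ hgfin.toFinset := by
    intro x hx
    rw [Set.Finite.mem_toFinset]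
    have : x ∈ (c (hgfin.toFinset.card + 1 + 1)).1 := hx
    exact hsub (hgfin.toFinset.card + 1) x this
  have := Finset.card_le_card hsubF
  have := hcard (hgfin.toFinset.card + 2)
  omega


section Main

attribute [local instance] Classical.propDecidable

variable (hcl : IsClosed F) (hfin : ∀ f ∈ F, {n : ℕ | f n = true}.Finite)
  (hU : ∀ s : Set ℕ, s.Finite → sᶜ ∈ U) (f₀ : ℕ → Bool) (hf₀ : f₀ ∈ F)

/-- extension candidates -/
def A (t : Finset ℕ) : Set ℕ := {m | m ∉ t ∧ TT F (insert m t)}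

noncomputable def w : Finset ℕ → ℕ → Bool :=
  (relWF F U hcl hfin hU).fix fun t rec =>
    if ht : TT F t then
      if _hA : A F t ∈ U then
        (ulim F U hcl
          (fun m =>
            if h : m ∉ t ∧ TT F (insert m t) then
              (if _hh : rec (insert m t) ⟨Finset.ssubset_insert h.1, h.2⟩ ∈ F then
                rec (insert m t) ⟨Finset.ssubset_insert h.1, h.2⟩ else f₀)
            else f₀)
          (by
            intro m
            split_ifs with h hh
            · exact hh
            · exact hf₀
            · exact hf₀)).choose
      else ht.choose
    else f₀

/-- the padded extension function used in the recursion -/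
noncomputable def wext (t : Finset ℕ) : ℕ → ℕ → Bool := fun m =>
  if h : m ∉ t ∧ TT F (insert m t) then
    (if _hh : w F U hcl hfin hU f₀ hf₀ (insert m t) ∈ F then
        w F U hcl hfin hU f₀ hf₀ (insert m t) else f₀)
  else f₀

theorem wext_mem (t : Finset ℕ) : ∀ m, wext F U hcl hfin hU f₀ hf₀ t m ∈ F := by
  intro m; unfold wext; split_ifs with h hh
  · exact hh
  · exact hf₀
  · exact hf₀

theorem w_eq (t : Finset ℕ) :
    w F U hcl hfin hU f₀ hf₀ t =
      if ht : TT F t then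
        if _hA : A F t ∈ U then
          (ulim F U hcl (wext F U hcl hfin hU f₀ hf₀ t)
            (wext_mem F U hcl hfin hU f₀ hf₀ t)).choose
        else ht.choose
      else f₀ :=
  WellFounded.fix_eq _ _ t

local notation "W" => w F U hcl hfin hU f₀ hf₀

theorem w_mem (t : Finset ℕ) : W t ∈ F := by
  rw [w_eq]
  split_ifs with ht hA
  · exact (ulim F U hcl (wext F U hcl hfin hU f₀ hf₀ t)
      (wext_mem F U hcl hfin hU f₀ hf₀ t)).choose_spec.1
  · exact ht.choose_spec.1
  · exact hf₀

theorem w_tt (t : Finset ℕ) (ht : TT F t) : ∀ x ∈ t, W t x = true := by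
  revert ht
  refine (relWF F U hcl hfin hU).induction
    (C := fun t => TT F t → ∀ x ∈ t, W t x = true) t ?_
  intro t ih ht x hx
  rw [w_eq, dif_pos ht]
  split_ifs with hA
  · have hspec := (ulim F U hcl (wext F U hcl hfin hU f₀ hf₀ t)
      (wext_mem F U hcl hfin hU f₀ hf₀ t)).choose_spec
    have hVx := hspec.2 x
    obtain ⟨m, hm1, hm2⟩ := Ultrafilter.nonempty_of_mem (Filter.inter_mem hVx hA)
    have hcond : m ∉ t ∧ TT F (insert m t) := hm2
    have hwm : wext F U hcl hfin hU f₀ hf₀ t m = W (insert m t) := by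
      unfold wext
      rw [dif_pos hcond, dif_pos (w_mem F U hcl hfin hU f₀ hf₀ (insert m t))]
    have hih := ih (insert m t) ⟨Finset.ssubset_insert hcond.1, hcond.2⟩ hcond.2 x
      (Finset.mem_insert_of_mem hx)
    have hm1' : wext F U hcl hfin hU f₀ hf₀ t m x = _ := hm1
    rw [← hm1', hwm]
    exact hih
  · exact ht.choose_spec.2 x hx

theorem w_limit (t : Finset ℕ) (ht : TT F t) (hA : A F t ∈ U) (x : ℕ) :
    {m | m ∈ A F t → W (insert m t) x = W t x} ∈ U := by
  have hdef : W t = (ulim F U hcl (wext F U hcl hfin hU f₀ hf₀ t)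
      (wext_mem F U hcl hfin hU f₀ hf₀ t)).choose := by
    rw [w_eq, dif_pos ht, dif_pos hA]
  have hspec := (ulim F U hcl (wext F U hcl hfin hU f₀ hf₀ t)
      (wext_mem F U hcl hfin hU f₀ hf₀ t)).choose_spec.2 x
  refine Filter.mem_of_superset hspec ?_
  intro m hm hmA
  have hcond : m ∉ t ∧ TT F (insert m t) := hmA
  have hwm : wext F U hcl hfin hU f₀ hf₀ t m = W (insert m t) := by
    unfold wext
    rw [dif_pos hcond, dif_pos (w_mem F U hcl hfin hU f₀ hf₀ (insert m t))]
  rw [hdef, ← hm, hwm]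

variable (Nset : Set ℕ)

/-- the set of good next choices given the current finite stage `S`. -/
def good (S : Finset ℕ) : Set ℕ :=
  Nset ∩ {m | ∀ x ∈ S, x < m} ∩
  {m | ∀ t ∈ S.powerset, TT F t → W t m = false} ∩
  {m | ∀ t ∈ S.powerset, TT F t → A F t ∉ U → ¬ TT F (insert m t)} ∩
  {m | ∀ t ∈ S.powerset, TT F t → A F t ∈ U → TT F (insert m t) →
        ∀ y ∈ S, W (insert m t) y = W t y}

theorem quant_biInter {α : Type*} (S : Finset α) (P : α → ℕ → Prop) :
    {m | ∀ t ∈ S, P t m} = ⋂ t ∈ S, {m | P t m} := by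
  ext m; simp

theorem good_mem (hNU : Nset ∈ U) (S : Finset ℕ) : good F U hcl hfin hU f₀ hf₀ Nset S ∈ U := by
  have hgt : {m | ∀ x ∈ S, x < m} ∈ U := by
    rw [quant_biInter, ← Ultrafilter.mem_coe, Filter.biInter_finset_mem]
    intro x _
    have : {m : ℕ | x < m} = {m : ℕ | m ≤ x}ᶜ := by
      ext m; simp [Nat.not_le, Nat.not_lt]
    rw [this]
    exact hU _ (Set.finite_le_nat x)
  refine Filter.inter_mem (Filter.inter_mem (Filter.inter_mem (Filter.inter_mem hNU hgt) ?_) ?_) ?_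
  · rw [quant_biInter, Filter.biInter_finset_mem]
    intro t _
    by_cases hTT : TT F t
    · have hsupp : {m | W t m = false} ∈ U := by
        have : {m | W t m = false} = {n | W t n = true}ᶜ := by
          ext m; simp
        rw [this]
        exact hU _ (hfin _ (w_mem F U hcl hfin hU f₀ hf₀ t))
      exact Filter.mem_of_superset hsupp (fun m hm _ => hm)
    · refine Filter.mem_of_superset Filter.univ_mem ?_
      intro m _ h
      exact absurd h hTT
  · rw [quant_biInter, Filter.biInter_finset_mem]
    intro t htp
    by_cases hTT : TT F t
    · by_cases hA : A F t ∈ U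
      · refine Filter.mem_of_superset Filter.univ_mem ?_
        intro m _ _ h
        exact absurd hA h
      · have hcomp : (A F t)ᶜ ∈ U := (Ultrafilter.compl_mem_iff_notMem).mpr hA
        refine Filter.mem_of_superset (Filter.inter_mem hcomp hgt) ?_
        rintro m ⟨hm1, hm2⟩ _ _ hTTi
        refine hm1 ⟨?_, hTTi⟩
        intro hmt
        exact lt_irrefl m (hm2 m (Finset.mem_powerset.mp htp hmt))
    · refine Filter.mem_of_superset Filter.univ_mem ?_
      intro m _ h
      exact absurd h hTT
  · rw [quant_biInter, Filter.biInter_finset_mem]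
    intro t htp
    by_cases hTT : TT F t
    · by_cases hA : A F t ∈ U
      · have hlim : (⋂ y ∈ S, {m | m ∈ A F t → W (insert m t) y = W t y}) ∈ U := by
          rw [← Ultrafilter.mem_coe, Filter.biInter_finset_mem]
          intro y _
          exact w_limit F U hcl hfin hU f₀ hf₀ t hTT hA y
        refine Filter.mem_of_superset (Filter.inter_mem hlim hgt) ?_
        rintro m ⟨hm1, hm2⟩ _ _ hTTi y hy
        simp only [Set.mem_iInter, Set.mem_setOf_eq] at hm1
        refine hm1 y hy ⟨?_, hTTi⟩
        intro hmt
        exact lt_irrefl m (hm2 m (Finset.mem_powerset.mp htp hmt))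
      · refine Filter.mem_of_superset Filter.univ_mem ?_
        intro m _ _ h
        exact absurd h hA
    · refine Filter.mem_of_superset Filter.univ_mem ?_
      intro m _ h
      exact absurd h hTT

noncomputable def pick (hNU : Nset ∈ U) (S : Finset ℕ) : ℕ :=
  (Ultrafilter.nonempty_of_mem (good_mem F U hcl hfin hU f₀ hf₀ Nset hNU S)).choose

theorem pick_mem (hNU : Nset ∈ U) (S : Finset ℕ) :
    pick F U hcl hfin hU f₀ hf₀ Nset hNU S ∈ good F U hcl hfin hU f₀ hf₀ Nset S :=
  (Ultrafilter.nonempty_of_mem (good_mem F U hcl hfin hU f₀ hf₀ Nset hNU S)).choose_spec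

noncomputable def Sseq (hNU : Nset ∈ U) : ℕ → Finset ℕ
  | 0 => ∅
  | (k+1) => insert (pick F U hcl hfin hU f₀ hf₀ Nset hNU (Sseq hNU k)) (Sseq hNU k)

local notation "SS" => Sseq F U hcl hfin hU f₀ hf₀ Nset
local notation "PK" => pick F U hcl hfin hU f₀ hf₀ Nset

theorem Sseq_mono (hNU : Nset ∈ U) {i j : ℕ} (hij : i ≤ j) : SS hNU i ⊆ SS hNU j := by
  induction j with
  | zero => simpa [Nat.le_zero.mp hij] using Finset.Subset.refl _
  | succ j ih =>
    rcases Nat.lt_or_ge i (j + 1) with h | h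
    · refine (ih (Nat.lt_succ_iff.mp h)).trans ?_
      intro y hy
      exact Finset.mem_insert_of_mem hy
    · have : i = j + 1 := le_antisymm hij h
      simp [this]

theorem Sseq_sub (hNU : Nset ∈ U) : ∀ k, ↑(SS hNU k) ⊆ Nset := by
  intro k
  induction k with
  | zero => simp [Sseq]
  | succ k ih =>
    intro y hy
    rcases Finset.mem_insert.mp hy with h | h
    · have hp := pick_mem F U hcl hfin hU f₀ hf₀ Nset hNU (SS hNU k)
      exact h ▸ hp.1.1.1.1
    · exact ih h

theorem inv (hNU : Nset ∈ U) : ∀ k : ℕ, ∀ t ∈ (SS hNU k).powerset, TT F t →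
    ∀ x ∈ SS hNU k, (W t x = true ↔ x ∈ t) := by
  intro k
  induction k with
  | zero => intro t htp htT x hx; simp [Sseq] at hx
  | succ k ih =>
    intro t htp htT x hx
    have hp := pick_mem F U hcl hfin hU f₀ hf₀ Nset hNU (SS hNU k)
    set m := PK hNU (SS hNU k) with hmdef
    have hstep : SS hNU (k+1) = insert m (SS hNU k) := rfl
    have hgt : ∀ y ∈ SS hNU k, y < m := hp.1.1.1.2
    rw [hstep] at htp hx
    have htsub := Finset.mem_powerset.mp htp
    by_cases hmt : m ∈ t
    · have ht'sub : t.erase m ⊆ SS hNU k := by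
        intro y hy
        have hy1 := Finset.mem_of_mem_erase hy
        have hy2 := Finset.ne_of_mem_erase hy
        rcases Finset.mem_insert.mp (htsub hy1) with h | h
        · exact absurd h hy2
        · exact h
      have hins : insert m (t.erase m) = t := Finset.insert_erase hmt
      have hTT' : TT F (t.erase m) := TT_mono (Finset.erase_subset m t) htT
      have ht'p : t.erase m ∈ (SS hNU k).powerset := Finset.mem_powerset.mpr ht'sub
      have hA : A F (t.erase m) ∈ U := by
        by_contra hA
        exact (hp.1.2 (t.erase m) ht'p hTT' hA) (by rw [hins]; exact htT)
      have hagree : ∀ y ∈ SS hNU k, W t y = W (t.erase m) y := by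
        intro y hy
        have h5 := hp.2 (t.erase m) ht'p hTT' hA (by rw [hins]; exact htT) y hy
        conv_lhs => rw [← hins]
        exact h5
      rcases Finset.mem_insert.mp hx with hxm | hxk
      · subst hxm
        simp only [hmt, iff_true]
        exact w_tt F U hcl hfin hU f₀ hf₀ t htT m hmt
      · have h1 := ih (t.erase m) ht'p hTT' x hxk
        rw [hagree x hxk, h1]
        constructor
        · intro h; exact Finset.mem_of_mem_erase h
        · intro h
          refine Finset.mem_erase.mpr ⟨?_, h⟩
          intro hxeq
          exact absurd (hxeq ▸ hgt x hxk) (lt_irrefl m)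
    · have htsub' : t ⊆ SS hNU k := by
        intro y hy
        rcases Finset.mem_insert.mp (htsub hy) with h | h
        · exact absurd (h ▸ hy) hmt
        · exact h
      rcases Finset.mem_insert.mp hx with hxm | hxk
      · subst hxm
        have hfalse := hp.1.1.2 t (Finset.mem_powerset.mpr htsub') htT
        simp [hfalse, hmt]
      · exact ih t (Finset.mem_powerset.mpr htsub') htT x hxk

theorem finset_stage (hNU : Nset ∈ U) (t : Finset ℕ) :
    (∀ x ∈ t, ∃ k, x ∈ SS hNU k) → ∃ k, t ⊆ SS hNU k := by
  induction t using Finset.induction_on with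
  | empty => exact fun _ => ⟨0, by simp⟩
  | @insert a s _ ih =>
    intro h
    obtain ⟨k1, hk1⟩ := h a (Finset.mem_insert_self a s)
    obtain ⟨k2, hk2⟩ := ih (fun x hx => h x (Finset.mem_insert_of_mem hx))
    refine ⟨max k1 k2, ?_⟩
    intro y hy
    rcases Finset.mem_insert.mp hy with rfl | hy'
    · exact Sseq_mono F U hcl hfin hU f₀ hf₀ Nset hNU (le_max_left _ _) hk1
    · exact Sseq_mono F U hcl hfin hU f₀ hf₀ Nset hNU (le_max_right _ _) (hk2 hy')

include hcl hfin hU f₀ hf₀ in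
theorem main (hNU : Nset ∈ U) :
    ∃ M : Set ℕ, M ⊆ Nset ∧ M.Infinite ∧
      ∀ t : Finset ℕ, ↑t ⊆ M → TT F t → ∃ g ∈ F, {n | g n = true} ∩ M = ↑t := by
  classical
  set M : Set ℕ := {x | ∃ k, x ∈ SS hNU k} with hMdef
  refine ⟨M, ?_, ?_, ?_⟩
  · rintro x ⟨k, hk⟩
    exact Sseq_sub F U hcl hfin hU f₀ hf₀ Nset hNU k hk
  · have hsm : StrictMono (fun k => PK hNU (SS hNU k)) := by
      apply strictMono_nat_of_lt_succ
      intro k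
      have h1 : PK hNU (SS hNU k) ∈ SS hNU (k+1) := Finset.mem_insert_self _ _
      exact (pick_mem F U hcl hfin hU f₀ hf₀ Nset hNU (SS hNU (k+1))).1.1.1.2 _ h1
    refine Set.infinite_of_injective_forall_mem (f := fun k => PK hNU (SS hNU k))
      hsm.injective ?_
    intro k
    exact ⟨k + 1, Finset.mem_insert_self _ _⟩
  · intro t htM htT
    obtain ⟨k, hk⟩ := finset_stage F U hcl hfin hU f₀ hf₀ Nset hNU t
      (fun x hx => htM (Finset.mem_coe.mpr hx))
    refine ⟨W t, w_mem F U hcl hfin hU f₀ hf₀ t, ?_⟩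
    ext x
    constructor
    · rintro ⟨hgx, j, hj⟩
      have hxK : x ∈ SS hNU (max j k) :=
        Sseq_mono F U hcl hfin hU f₀ hf₀ Nset hNU (le_max_left _ _) hj
      have htK : t ⊆ SS hNU (max j k) :=
        hk.trans (Sseq_mono F U hcl hfin hU f₀ hf₀ Nset hNU (le_max_right _ _))
      have := (inv F U hcl hfin hU f₀ hf₀ Nset hNU (max j k) t
        (Finset.mem_powerset.mpr htK) htT x hxK).mp hgx
      exact Finset.mem_coe.mpr this
    · intro hxt
      have hxt' : x ∈ t := Finset.mem_coe.mp hxt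
      exact ⟨w_tt F U hcl hfin hU f₀ hf₀ t htT x hxt', ⟨k, hk hxt'⟩⟩

end Main

end RosAux

open Set

/-- **Rosenthal's combinatorial principle.**  Let `F` be a compact family of finite subsets
of `ℕ`, identified with a closed subset of the Cantor space `ℕ → Bool` all of whose members
have finite support.  Then for every infinite `N ⊆ ℕ` there is an infinite `M ⊆ N` such that
the trace family `F[M] = {F ∩ M : F ∈ F}` is hereditary. -/
theorem rosenthal_combinatorial_principle
    (F : Set (ℕ → Bool)) (hF_closed : IsClosed F)
    (hF_finite : ∀ f ∈ F, {n : ℕ | f n = true}.Finite)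
    (N : Set ℕ) (hN : N.Infinite) :
    ∃ M : Set ℕ, M ⊆ N ∧ M.Infinite ∧
      ∀ A B : Set ℕ, A ⊆ B →
        (∃ f ∈ F, B = {n : ℕ | f n = true} ∩ M) →
        (∃ g ∈ F, A = {n : ℕ | g n = true} ∩ M) := by
  classical
  rcases Set.eq_empty_or_nonempty F with hF | hFne
  · refine ⟨N, subset_rfl, hN, ?_⟩
    rintro A B hAB ⟨f, hf, _⟩
    rw [hF] at hf
    exact absurd hf (Set.notMem_empty f)
  · obtain ⟨f₀, hf₀⟩ := hFne
    have hnb : (Filter.cofinite ⊓ Filter.principal N).NeBot :=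
      hN.cofinite_inf_principal_neBot
    set U := Ultrafilter.of (Filter.cofinite ⊓ Filter.principal N) with hUdef
    have hle : ↑U ≤ Filter.cofinite ⊓ Filter.principal N := Ultrafilter.of_le _
    have hNU : N ∈ U :=
      hle (Filter.mem_inf_of_right (Filter.mem_principal_self N))
    have hU : ∀ s : Set ℕ, s.Finite → sᶜ ∈ U := fun s hs =>
      hle (Filter.mem_inf_of_left hs.compl_mem_cofinite)
    obtain ⟨M, hMN, hMinf, hM⟩ :=
      RosAux.main F U hF_closed hF_finite hU f₀ hf₀ N hNU
    refine ⟨M, hMN, hMinf, ?_⟩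
    rintro A B hAB ⟨f, hf, hB⟩
    have hABf : ∀ x ∈ A, x ∈ ({n : ℕ | f n = true} ∩ M) := by
      intro x hx
      rw [← hB]
      exact hAB hx
    have hAfin : A.Finite :=
      Set.Finite.subset (hF_finite f hf) (fun x hx => (hABf x hx).1)
    have hAM : ↑hAfin.toFinset ⊆ M := by
      intro x hx
      have hx' : x ∈ A := hAfin.mem_toFinset.mp (Finset.mem_coe.mp hx)
      exact (hABf x hx').2
    have hTT : RosAux.TT F hAfin.toFinset := by
      refine ⟨f, hf, ?_⟩
      intro x hx
      exact (hABf x (hAfin.mem_toFinset.mp hx)).1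
    obtain ⟨g, hg, hgeq⟩ := hM hAfin.toFinset hAM hTT
    exact ⟨g, hg, ((hgeq.trans hAfin.coe_toFinset).symm)⟩
end

section
/- Let S be the dyadic tree and (x_s)_{s∈S} a family in a separable Banach space X. The set A = {β ∈ C(S) : (x_s)_{s∈β} is semi-boundedly complete} is co-analytic in the Polish space C(S); equivalently, its complement is the projection to C(S) of a Borel subset of C(S) × ℝ^ℕ. -/
open Filter Topology Set

noncomputable section

instance : TopologicalSpace (List Bool) := ⊥
instance : MeasurableSpace (List Bool) := ⊤

/-- A strictly increasing (for the initial-segment/prefix order of the dyadic tree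
`S = List Bool`) enumeration of an infinite chain of `S`. -/
def IsChainSeq (s : ℕ → List Bool) : Prop :=
  ∀ i : ℕ, s i <+: s (i + 1) ∧ s i ≠ s (i + 1)

/-- The Polish space `C(S)` of infinite chains of the dyadic tree, each chain enumerated
increasingly; the (product of discrete) topology coincides with the one inherited from
`2^S`. -/
abbrev ChainSpace : Type := {s : ℕ → List Bool // IsChainSeq s}

/-- `e` realizes a (dyadic) subtree of `S`, namely its range `T = e '' S`, via an order
isomorphism of `S` onto `T`: `T` has a single minimal element and every element of `T`
has exactly two immediate successors in `T`. -/
def IsSubtree (e : List Bool → List Bool) : Prop :=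
  ∀ s t : List Bool, s <+: t ↔ e s <+: e t

/-- `y` is semi-boundedly complete: for every bounded scalar sequence `(λ_i)`, if the
partial sums `∑_{i<n} λ_i y_i` are norm-bounded then `λ_i → 0`. -/
def SemiBoundedlyComplete {X : Type*} [NormedAddCommGroup X] [NormedSpace ℝ X]
    (y : ℕ → X) : Prop :=
  ∀ lam : ℕ → ℝ, (∃ M : ℝ, ∀ i, |lam i| ≤ M) →
    (∃ K : ℝ, ∀ n : ℕ, ‖∑ i ∈ Finset.range n, lam i • y i‖ ≤ K) →
    Tendsto lam atTop (𝓝 0)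

instance : DiscreteTopology (List Bool) := ⟨rfl⟩

instance : BorelSpace (List Bool) := ⟨borel_eq_top_of_discrete.symm⟩

lemma isClosed_isChainSeq : IsClosed {s : ℕ → List Bool | IsChainSeq s} := by
  have h : {s : ℕ → List Bool | IsChainSeq s} =
      ⋂ i, (fun s : ℕ → List Bool => (s i, s (i + 1))) ⁻¹'
        {p : List Bool × List Bool | p.1 <+: p.2 ∧ p.1 ≠ p.2} := by
    ext s
    simp [IsChainSeq, Set.mem_iInter]
  rw [h]
  exact isClosed_iInter fun i =>
    (isClosed_discrete _).preimage ((continuous_apply i).prodMk (continuous_apply (i + 1)))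

instance : PolishSpace (List Bool) := {}

instance : PolishSpace ChainSpace := isClosed_isChainSeq.polishSpace

instance : BorelSpace ChainSpace := Subtype.borelSpace {s | IsChainSeq s}

instance : SecondCountableTopology ChainSpace := PolishSpace.toSecondCountableTopology

/-- The set `A = {β ∈ C(S) : (x_s)_{s∈β} is semi-boundedly complete}` is co-analytic in the
Polish space `C(S)`: its complement is analytic, and indeed is the projection to `C(S)` of
a Borel subset of `C(S) × ℝ^ℕ`. -/
theorem semiBoundedlyComplete_chains_coanalytic
    {X : Type*} [NormedAddCommGroup X] [NormedSpace ℝ X] [CompleteSpace X]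
    [TopologicalSpace.SeparableSpace X] (x : List Bool → X) :
    MeasureTheory.AnalyticSet
      {β : ChainSpace | SemiBoundedlyComplete (fun i => x (β.1 i))}ᶜ ∧
    ∃ B : Set (ChainSpace × (ℕ → ℝ)), MeasurableSet B ∧
      {β : ChainSpace | SemiBoundedlyComplete (fun i => x (β.1 i))}ᶜ = Prod.fst '' B := by
  classical
  set B : Set (ChainSpace × (ℕ → ℝ)) :=
    {p | (∃ M : ℕ, ∀ i, |p.2 i| ≤ (M : ℝ)) ∧
         (∃ K : ℕ, ∀ n : ℕ, ‖∑ i ∈ Finset.range n, p.2 i • x (p.1.1 i)‖ ≤ (K : ℝ)) ∧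
         ¬ Tendsto p.2 atTop (𝓝 (0 : ℝ))} with hBdef
  -- measurability of B
  have h1 : MeasurableSet {p : ChainSpace × (ℕ → ℝ) | ∃ M : ℕ, ∀ i, |p.2 i| ≤ (M : ℝ)} := by
    have : {p : ChainSpace × (ℕ → ℝ) | ∃ M : ℕ, ∀ i, |p.2 i| ≤ (M : ℝ)} =
        ⋃ M : ℕ, ⋂ i : ℕ, {p : ChainSpace × (ℕ → ℝ) | |p.2 i| ≤ (M : ℝ)} := by
      ext p; simp [Set.mem_iUnion, Set.mem_iInter]
    rw [this]
    refine MeasurableSet.iUnion fun M => MeasurableSet.iInter fun i => ?_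
    exact (isClosed_le (((continuous_apply i).comp continuous_snd).abs)
      continuous_const).measurableSet
  have h2 : MeasurableSet {p : ChainSpace × (ℕ → ℝ) |
      ∃ K : ℕ, ∀ n : ℕ, ‖∑ i ∈ Finset.range n, p.2 i • x (p.1.1 i)‖ ≤ (K : ℝ)} := by
    have : {p : ChainSpace × (ℕ → ℝ) |
        ∃ K : ℕ, ∀ n : ℕ, ‖∑ i ∈ Finset.range n, p.2 i • x (p.1.1 i)‖ ≤ (K : ℝ)} =
        ⋃ K : ℕ, ⋂ n : ℕ,
          {p : ChainSpace × (ℕ → ℝ) | ‖∑ i ∈ Finset.range n, p.2 i • x (p.1.1 i)‖ ≤ (K : ℝ)} := by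
      ext p; simp [Set.mem_iUnion, Set.mem_iInter]
    rw [this]
    refine MeasurableSet.iUnion fun K => MeasurableSet.iInter fun n => ?_
    have hcont : Continuous fun p : ChainSpace × (ℕ → ℝ) =>
        ‖∑ i ∈ Finset.range n, p.2 i • x (p.1.1 i)‖ := by
      refine (Continuous.norm ?_)
      refine continuous_finset_sum _ fun i _ => ?_
      have hx : Continuous fun p : ChainSpace × (ℕ → ℝ) => x (p.1.1 i) :=
        (continuous_of_discreteTopology (f := x)).comp
          ((continuous_apply i).comp (continuous_subtype_val.comp continuous_fst))
      exact ((continuous_apply i).comp continuous_snd).smul hx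
    exact (isClosed_le hcont continuous_const).measurableSet
  have h3 : MeasurableSet {p : ChainSpace × (ℕ → ℝ) | Tendsto p.2 atTop (𝓝 (0 : ℝ))} := by
    exact measurableSet_tendsto (𝓝 (0 : ℝ))
      (fun n => (measurable_pi_apply n).comp measurable_snd)
  have hBmeas : MeasurableSet B := h1.inter (h2.inter h3.compl)
  -- complement equality
  have hA : {β : ChainSpace | SemiBoundedlyComplete (fun i => x (β.1 i))}ᶜ = Prod.fst '' B := by
    ext β
    simp only [Set.mem_compl_iff, Set.mem_setOf_eq, Set.mem_image, hBdef]
    constructor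
    · intro hβ
      rw [SemiBoundedlyComplete] at hβ
      push_neg at hβ
      obtain ⟨lam, ⟨M, hM⟩, ⟨K, hK⟩, hnt⟩ := hβ
      refine ⟨(β, lam), ⟨⟨⌈M⌉₊, fun i => (hM i).trans (Nat.le_ceil M)⟩,
        ⟨⌈K⌉₊, fun n => (hK n).trans (Nat.le_ceil K)⟩, hnt⟩, rfl⟩
    · rintro ⟨⟨β', lam⟩, ⟨⟨M, hM⟩, ⟨K, hK⟩, hnt⟩, rfl⟩
      intro hsbc
      exact hnt (hsbc lam ⟨M, hM⟩ ⟨K, hK⟩)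
  refine ⟨?_, B, hBmeas, hA⟩
  rw [hA]
  exact hBmeas.analyticSet.image_of_continuous continuous_fst
end
end

section
/- Let (y_i) be a normalized basic sequence in a Banach space with basis constant D, let δ > 0, and suppose there exists R > 0 such that for every absolutely convex combination x = ∑_{n>k} a_n y_n of the tail (y_n)_{n>k} with ‖x‖ ≥ δ and every choice of signs, the signed sum has norm ≥ R. Suppose also the finite sequence (y_1,…,y_k) is B-unconditional. Then (y_i) is convexly unconditional at level 1/k with constant C = min{ δ/(2B·D) · (1/2) , (δ/(2D)) · R } in the following sense: for every absolutely convex combination x = ∑_{n=1}^∞ a_n y_n with ‖x‖ ≥ 1/k (where 1/(2k) ≤ δ is assumed), and every sequence of signs (ε_n), ‖∑_n ε_n a_n y_n‖ ≥ C, provided δ = 1/(2k). -/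
/-- **Splitting step for convex unconditionality.**  Let `(y_i)` be a normalized `D`-basic
sequence, `k ≥ 1`, `δ = 1/(2k)`, suppose the finite sequence `(y_0,…,y_{k-1})` is
`B`-unconditional and every absolutely convex combination of the tail `(y_i)_{i≥k}` of norm
`≥ δ` has all its signed sums of norm `≥ R`.  Then every absolutely convex combination
`∑ a_n y_n` of norm `≥ 1/k` has all its signed sums of norm
`≥ min( δ/(2BD) · (1/2) , (δ/(2D)) · R )`. -/
theorem convex_unconditionality_splitting
    {X : Type*} [NormedAddCommGroup X] [NormedSpace ℝ X]
    (y : ℕ → X) (hnorm : ∀ i, ‖y i‖ = 1)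
    (D : ℝ) (hD : 1 ≤ D)
    (hbasic : ∀ m n : ℕ, m ≤ n → ∀ a : ℕ → ℝ,
      ‖∑ i ∈ Finset.range m, a i • y i‖ ≤ D * ‖∑ i ∈ Finset.range n, a i • y i‖)
    (k : ℕ) (hk : 0 < k) (δ : ℝ) (hδ : δ = 1 / (2 * (k : ℝ)))
    (R : ℝ) (hR : 0 < R)
    (htail : ∀ m : ℕ, ∀ a : ℕ → ℝ, (∑ i ∈ Finset.Ico k m, |a i|) ≤ 1 →
      δ ≤ ‖∑ i ∈ Finset.Ico k m, a i • y i‖ →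
      ∀ ε : ℕ → ℝ, (∀ i, ε i = 1 ∨ ε i = -1) →
        R ≤ ‖∑ i ∈ Finset.Ico k m, (ε i * a i) • y i‖)
    (B : ℝ) (hB : 0 < B)
    (hfin : ∀ a : ℕ → ℝ, ∀ I : Finset ℕ, I ⊆ Finset.range k →
      ‖∑ i ∈ I, a i • y i‖ ≤ B * ‖∑ i ∈ Finset.range k, a i • y i‖) :
    ∀ m : ℕ, ∀ a : ℕ → ℝ, (∑ i ∈ Finset.range m, |a i|) ≤ 1 →
      1 / (k : ℝ) ≤ ‖∑ i ∈ Finset.range m, a i • y i‖ →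
      ∀ ε : ℕ → ℝ, (∀ i, ε i = 1 ∨ ε i = -1) →
        min (δ / (2 * B * D) * (1 / 2)) (δ / (2 * D) * R) ≤
          ‖∑ i ∈ Finset.range m, (ε i * a i) • y i‖ := by
  intro m a hsum hnorm1 ε hε
  have hk1 : (1:ℝ) ≤ (k:ℝ) := by exact_mod_cast hk
  have hkpos : (0:ℝ) < (k:ℝ) := by linarith
  have hδpos : 0 < δ := by rw [hδ]; positivity
  have hδle : δ ≤ 1 := by
    rw [hδ, div_le_one (by positivity)]; linarith
  have hD0 : (0:ℝ) < D := lt_of_lt_of_le one_pos hD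
  set m' := min k m with hm'
  have hm'm : m' ≤ m := min_le_right _ _
  have hm'k : m' ≤ k := min_le_left _ _
  have hsplit : ∀ b : ℕ → ℝ, ∑ i ∈ Finset.range m, b i • y i
      = ∑ i ∈ Finset.range m', b i • y i + ∑ i ∈ Finset.Ico k m, b i • y i := by
    intro b
    rcases le_or_gt k m with h | h
    · have h1 : m' = k := min_eq_left h
      simp only [h1, Finset.range_eq_Ico]
      exact (Finset.sum_Ico_consecutive _ (Nat.zero_le k) h).symm
    · have h1 : m' = m := min_eq_right h.le
      have h2 : Finset.Ico k m = ∅ := Finset.Ico_eq_empty (by omega)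
      rw [h1, h2, Finset.sum_empty, add_zero]
  have hheadε : ‖∑ i ∈ Finset.range m', (ε i * a i) • y i‖
      ≤ D * ‖∑ i ∈ Finset.range m, (ε i * a i) • y i‖ :=
    hbasic m' m hm'm _
  set Sε := ‖∑ i ∈ Finset.range m, (ε i * a i) • y i‖ with hSε
  have hSε0 : 0 ≤ Sε := norm_nonneg _
  rcases le_or_gt δ ‖∑ i ∈ Finset.range m', a i • y i‖ with hcase | hcase
  · -- Case A: head is big
    set b : ℕ → ℝ := fun i => if i < m' then ε i * a i else 0 with hb
    have hH : ∑ i ∈ Finset.range k, b i • y i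
        = ∑ i ∈ Finset.range m', (ε i * a i) • y i := by
      rw [← Finset.sum_subset (Finset.range_subset_range.mpr hm'k)
        (fun x _ hx => by
          simp only [hb]
          rw [if_neg (by simpa using hx), zero_smul])]
      refine Finset.sum_congr rfl fun i hi => ?_
      simp only [hb]
      rw [if_pos (Finset.mem_range.mp hi)]
    set Ip := (Finset.range m').filter (fun i => 0 ≤ ε i) with hIp
    set In := (Finset.range m').filter (fun i => ¬ 0 ≤ ε i) with hIn
    have hIpk : Ip ⊆ Finset.range k :=
      (Finset.filter_subset _ _).trans (Finset.range_subset_range.mpr hm'k)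
    have hInk : In ⊆ Finset.range k :=
      (Finset.filter_subset _ _).trans (Finset.range_subset_range.mpr hm'k)
    have hIpval : ∑ i ∈ Ip, b i • y i = ∑ i ∈ Ip, a i • y i := by
      refine Finset.sum_congr rfl fun i hi => ?_
      obtain ⟨hi1, hi2⟩ := Finset.mem_filter.mp hi
      have hε1 : ε i = 1 := by
        rcases hε i with h | h
        · exact h
        · exfalso; rw [h] at hi2; linarith
      simp only [hb]
      rw [if_pos (Finset.mem_range.mp hi1), hε1, one_mul]
    have hInval : ∑ i ∈ In, b i • y i = - ∑ i ∈ In, a i • y i := by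
      rw [← Finset.sum_neg_distrib]
      refine Finset.sum_congr rfl fun i hi => ?_
      obtain ⟨hi1, hi2⟩ := Finset.mem_filter.mp hi
      have hε1 : ε i = -1 := by
        rcases hε i with h | h
        · exfalso; rw [h] at hi2; exact hi2 zero_le_one
        · exact h
      simp only [hb]
      rw [if_pos (Finset.mem_range.mp hi1), hε1]
      simp [neg_smul]
    have hheadsplit : ∑ i ∈ Finset.range m', a i • y i
        = ∑ i ∈ Ip, a i • y i + ∑ i ∈ In, a i • y i :=
      (Finset.sum_filter_add_sum_filter_not _ _ _).symm
    have hA1 : ‖∑ i ∈ Ip, a i • y i‖ ≤ B * ‖∑ i ∈ Finset.range m', (ε i * a i) • y i‖ := by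
      have := hfin b Ip hIpk
      rw [hH, hIpval] at this; exact this
    have hA2 : ‖∑ i ∈ In, a i • y i‖ ≤ B * ‖∑ i ∈ Finset.range m', (ε i * a i) • y i‖ := by
      have := hfin b In hInk
      rw [hH, hInval, norm_neg] at this; exact this
    have hhead : δ ≤ 2 * B * (D * Sε) := by
      have h1 : ‖∑ i ∈ Finset.range m', a i • y i‖
          ≤ ‖∑ i ∈ Ip, a i • y i‖ + ‖∑ i ∈ In, a i • y i‖ := by
        rw [hheadsplit]; exact norm_add_le _ _
      nlinarith [hheadε, hcase, norm_nonneg (∑ i ∈ Finset.range m', (ε i * a i) • y i)]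
    refine le_trans (min_le_left _ _) ?_
    rw [div_mul_eq_mul_div, div_le_iff₀ (by positivity)]
    nlinarith
  · -- Case B: tail is big
    have htailsum : (∑ i ∈ Finset.Ico k m, |a i|) ≤ 1 := by
      refine le_trans ?_ hsum
      rw [Finset.range_eq_Ico]
      exact Finset.sum_le_sum_of_subset_of_nonneg
        (Finset.Ico_subset_Ico (Nat.zero_le k) le_rfl)
        (fun i _ _ => abs_nonneg _)
    have htailnorm : δ ≤ ‖∑ i ∈ Finset.Ico k m, a i • y i‖ := by
      have h1 := hsplit a
      have h2 : ∑ i ∈ Finset.Ico k m, a i • y i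
          = ∑ i ∈ Finset.range m, a i • y i - ∑ i ∈ Finset.range m', a i • y i := by
        rw [h1]; abel
      rw [h2]
      have h3 := norm_sub_norm_le (∑ i ∈ Finset.range m, a i • y i)
        (∑ i ∈ Finset.range m', a i • y i)
      have h4 : (1:ℝ)/(k:ℝ) - δ = δ := by rw [hδ]; field_simp; ring
      linarith
    have hT := htail m a htailsum htailnorm ε hε
    have h2 : ∑ i ∈ Finset.Ico k m, (ε i * a i) • y i
        = ∑ i ∈ Finset.range m, (ε i * a i) • y i
          - ∑ i ∈ Finset.range m', (ε i * a i) • y i := by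
      rw [hsplit (fun i => ε i * a i)]; abel
    have h3 : R ≤ (1 + D) * Sε := by
      have := norm_sub_le (∑ i ∈ Finset.range m, (ε i * a i) • y i)
        (∑ i ∈ Finset.range m', (ε i * a i) • y i)
      rw [← h2] at this
      nlinarith
    refine le_trans (min_le_right _ _) ?_
    rw [div_mul_eq_mul_div, div_le_iff₀ (by positivity)]
    nlinarith
end

section
/- Let S be the dyadic tree and (x_s)_{s∈S} a family of nonzero vectors in a separable Banach space X. Assume Stern's theorem: for every Borel set A ⊆ C(S) there is a subtree T of S with C(T) ⊆ A or C(T) ∩ A = ∅. If for every chain β ∈ C(S) the sequence (x_s)_{s∈β} contains an unconditional subsequence, then there exist a subtree T of S and a constant C > 0 such that for every chain β of T the sequence (x_s)_{s∈β} is C-unconditional. -/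
open Filter Topology Set

noncomputable section

/-- `y` is `C`-unconditional. -/
def UnconditionalWith {X : Type*} [NormedAddCommGroup X] [NormedSpace ℝ X]
    (C : ℝ) (y : ℕ → X) : Prop :=
  ∀ n : ℕ, ∀ a : ℕ → ℝ, ∀ A : Finset ℕ, A ⊆ Finset.range n →
    ‖∑ i ∈ A, a i • y i‖ ≤ C * ‖∑ i ∈ Finset.range n, a i • y i‖

-- auxiliary lemmas

instance : MeasurableSingletonClass (List Bool) :=
  ⟨fun _ => MeasurableSpace.measurableSet_top⟩

lemma prefix_antisymm' {a b : List Bool} (h1 : a <+: b) (h2 : b <+: a) : a = b :=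
  h1.eq_of_length (le_antisymm h1.length_le h2.length_le)

lemma IsChainSeq.prefix_lt {s : ℕ → List Bool} (hs : IsChainSeq s) :
    ∀ i j : ℕ, i < j → s i <+: s j ∧ s i ≠ s j := by
  have hlen : StrictMono fun i => (s i).length := by
    apply strictMono_nat_of_lt_succ
    intro i
    rcases Nat.lt_or_ge (s i).length (s (i+1)).length with h | h
    · exact h
    · exact absurd ((hs i).1.eq_of_length (le_antisymm (hs i).1.length_le h)) (hs i).2
  have hpre : ∀ i k : ℕ, s i <+: s (i + k) := by
    intro i k
    induction k with
    | zero => exact List.prefix_refl _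
    | succ k ih => exact ih.trans (hs (i + k)).1
  intro i j hij
  constructor
  · have := hpre i (j - i); rwa [Nat.add_sub_cancel' hij.le] at this
  · intro h
    exact absurd (congrArg List.length h) (ne_of_lt (hlen hij))

lemma IsChainSeq.subseq {s : ℕ → List Bool} (hs : IsChainSeq s) {n : ℕ → ℕ}
    (hn : StrictMono n) : IsChainSeq fun i => s (n i) :=
  fun i => hs.prefix_lt _ _ (hn (Nat.lt_succ_self i))

lemma uncond_mono {X : Type*} [NormedAddCommGroup X] [NormedSpace ℝ X] {C C' : ℝ}
    {y : ℕ → X} (h : UnconditionalWith C y) (hCC' : C ≤ C') : UnconditionalWith C' y := by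
  intro n a A hA
  exact (h n a A hA).trans (mul_le_mul_of_nonneg_right hCC' (norm_nonneg _))

lemma uncond_subseq {X : Type*} [NormedAddCommGroup X] [NormedSpace ℝ X] {C : ℝ}
    {y : ℕ → X} (h : UnconditionalWith C y) {n : ℕ → ℕ} (hn : StrictMono n) :
    UnconditionalWith C fun i => y (n i) := by
  intro m a A hA
  set b : ℕ → ℝ := fun j => ∑ i ∈ Finset.range m, if n i = j then a i else 0 with hb
  have hbn : ∀ i ∈ Finset.range m, b (n i) = a i := by
    intro i hi
    show (∑ i' ∈ Finset.range m, if n i' = n i then a i' else 0) = a i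
    rw [Finset.sum_eq_single_of_mem i hi (fun j _ hj => if_neg fun hc => hj (hn.injective hc))]
    exact if_pos rfl
  have hb0 : ∀ j, j ∉ (Finset.range m).image n → b j = 0 := by
    intro j hj
    refine Finset.sum_eq_zero fun i hi => if_neg fun hc => hj ?_
    exact Finset.mem_image.mpr ⟨i, hi, hc⟩
  have hinj : ∀ x ∈ A, ∀ y ∈ A, n x = n y → x = y := fun a _ b _ h => hn.injective h
  have hinj' : ∀ x ∈ Finset.range m, ∀ y ∈ Finset.range m, n x = n y → x = y :=
    fun a _ b _ h => hn.injective h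
  have key1 : ∑ j ∈ A.image n, b j • y j = ∑ i ∈ A, a i • y (n i) := by
    rw [Finset.sum_image hinj]
    exact Finset.sum_congr rfl fun i hi => by rw [hbn i (hA hi)]
  have hsub2 : (Finset.range m).image n ⊆ Finset.range (n m) := by
    intro j hj
    obtain ⟨i, hi, rfl⟩ := Finset.mem_image.mp hj
    exact Finset.mem_range.mpr (hn (Finset.mem_range.mp hi))
  have e1 : ∑ j ∈ (Finset.range m).image n, b j • y j = ∑ j ∈ Finset.range (n m), b j • y j :=
    Finset.sum_subset hsub2 (fun j _ hj => by rw [hb0 j hj, zero_smul])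
  have e2 : ∑ j ∈ (Finset.range m).image n, b j • y j = ∑ i ∈ Finset.range m, a i • y (n i) := by
    rw [Finset.sum_image hinj']
    exact Finset.sum_congr rfl fun i hi => by rw [hbn i hi]
  have key2 : ∑ j ∈ Finset.range (n m), b j • y j = ∑ i ∈ Finset.range m, a i • y (n i) :=
    e1.symm.trans e2
  have hAsub : A.image n ⊆ Finset.range (n m) := by
    intro j hj
    obtain ⟨i, hi, rfl⟩ := Finset.mem_image.mp hj
    exact Finset.mem_range.mpr (hn (Finset.mem_range.mp (hA hi)))
  calc ‖∑ i ∈ A, a i • y (n i)‖ = ‖∑ j ∈ A.image n, b j • y j‖ := by rw [key1]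
    _ ≤ C * ‖∑ j ∈ Finset.range (n m), b j • y j‖ := h (n m) b (A.image n) hAsub
    _ = C * ‖∑ i ∈ Finset.range m, a i • y (n i)‖ := by rw [key2]

lemma meas_uncond {X : Type*} [NormedAddCommGroup X] [NormedSpace ℝ X]
    (y : List Bool → X) (C : ℝ) :
    MeasurableSet {β : ChainSpace | UnconditionalWith C fun i => y (β.1 i)} := by
  have hset : {β : ChainSpace | UnconditionalWith C fun i => y (β.1 i)} =
      ⋂ n : ℕ, (fun β : ChainSpace => fun i : Fin n => β.1 i) ⁻¹'
        {v : Fin n → List Bool | ∀ (a : ℕ → ℝ) (A : Finset ℕ), A ⊆ Finset.range n →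
          ‖∑ i ∈ A, a i • y (if h : i < n then v ⟨i, h⟩ else [])‖ ≤
          C * ‖∑ i ∈ Finset.range n, a i • y (if h : i < n then v ⟨i, h⟩ else [])‖} := by
    ext β
    simp only [Set.mem_setOf_eq, Set.mem_iInter, Set.mem_preimage, UnconditionalWith]
    refine forall_congr' fun n => forall_congr' fun a => forall_congr' fun A => ?_
    refine imp_congr_right fun hA => ?_
    have e1 : ∑ i ∈ A, a i • y (if h : i < n then β.1 i else []) = ∑ i ∈ A, a i • y (β.1 i) :=
      Finset.sum_congr rfl fun i hi => by rw [dif_pos (Finset.mem_range.mp (hA hi))]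
    have e2 : ∑ i ∈ Finset.range n, a i • y (if h : i < n then β.1 i else [])
        = ∑ i ∈ Finset.range n, a i • y (β.1 i) :=
      Finset.sum_congr rfl fun i hi => by rw [dif_pos (Finset.mem_range.mp hi)]
    rw [e1, e2]
  rw [hset]
  refine MeasurableSet.iInter fun n => ?_
  have hm : Measurable fun β : ChainSpace => fun i : Fin n => β.1 i :=
    measurable_pi_lambda _ fun i => (measurable_pi_apply (i : ℕ)).comp measurable_subtype_coe
  exact hm (Set.to_countable _).measurableSet

/-- If `(x_s)_{s∈S}` is a family of nonzero vectors such that along every infinite chain the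
sequence has an unconditional subsequence, then (assuming Stern's theorem for Borel sets of
chains) there are a subtree `T` of `S` and a constant `C > 0` such that `(x_s)_{s∈β}` is
`C`-unconditional for every chain `β` of `T`. -/
theorem subtree_uniformly_unconditional
    {X : Type*} [NormedAddCommGroup X] [NormedSpace ℝ X] [CompleteSpace X]
    [TopologicalSpace.SeparableSpace X]
    (x : List Bool → X) (hx : ∀ s, x s ≠ 0)
    (hStern : ∀ A : Set ChainSpace, MeasurableSet A →
      ∃ e : List Bool → List Bool, IsSubtree e ∧
        ((∀ β : ChainSpace, (∀ i, β.1 i ∈ Set.range e) → β ∈ A) ∨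
         (∀ β : ChainSpace, (∀ i, β.1 i ∈ Set.range e) → β ∉ A)))
    (hsub : ∀ β : ChainSpace, ∃ n : ℕ → ℕ, StrictMono n ∧
      ∃ C : ℝ, 0 < C ∧ UnconditionalWith C (fun i => x (β.1 (n i)))) :
    ∃ C : ℝ, 0 < C ∧ ∃ e : List Bool → List Bool, IsSubtree e ∧
      ∀ β : ChainSpace, (∀ i, β.1 i ∈ Set.range e) →
        UnconditionalWith C (fun i => x (β.1 i)) := by
  by_cases hall : ∃ k : ℕ, ∃ E : List Bool → List Bool, IsSubtree E ∧
      ∀ β : ChainSpace, (∀ i, β.1 i ∈ Set.range E) →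
        UnconditionalWith ((k : ℝ) + 1) fun i => x (β.1 i)
  · obtain ⟨k, E, hE, h⟩ := hall
    exact ⟨(k : ℝ) + 1, by positivity, E, hE, h⟩
  push_neg at hall
  exfalso
  -- one step of the construction: inside any subtree `E`, find a further subtree all of
  -- whose chains fail to be `(k+1)`-unconditional, branching strictly above `E []`.
  have step : ∀ E : List Bool → List Bool, IsSubtree E → ∀ k : ℕ,
      ∃ E' : List Bool → List Bool, IsSubtree E' ∧ Set.range E' ⊆ Set.range E ∧
        (E [] <+: E' [] ∧ E [] ≠ E' []) ∧
        ∀ β : ChainSpace, (∀ i, β.1 i ∈ Set.range E') →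
          ¬ UnconditionalWith ((k : ℝ) + 1) fun i => x (β.1 i) := by
    intro E hE k
    set g : List Bool → List Bool := fun l => E (true :: l) with hgdef
    have hg : IsSubtree g := by
      intro s t
      constructor
      · intro h; exact (hE _ _).mp (List.cons_prefix_cons.mpr ⟨rfl, h⟩)
      · intro h; exact (List.cons_prefix_cons.mp ((hE _ _).mpr h)).2
    obtain ⟨e, he, hor⟩ := hStern
      {γ : ChainSpace | UnconditionalWith ((k : ℝ) + 1) fun i => x (g (γ.1 i))}
      (meas_uncond (fun l => x (g l)) _)
    have hE' : IsSubtree fun l => g (e l) := fun s t => (he s t).trans (hg (e s) (e t))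
    have hrange : Set.range (fun l => g (e l)) ⊆ Set.range E := by
      rintro _ ⟨l, rfl⟩; exact ⟨true :: e l, rfl⟩
    have hstem : E [] <+: (fun l => g (e l)) [] ∧ E [] ≠ (fun l => g (e l)) [] := by
      constructor
      · exact (hE _ _).mp (List.nil_prefix)
      · intro h
        have h2 : E (true :: e []) <+: E [] := by rw [h]
        have h3 : (true :: e []) <+: [] := (hE _ _).mpr h2
        simpa using h3.length_le
    have htrans : ∀ β : ChainSpace, (∀ i, β.1 i ∈ Set.range fun l => g (e l)) →
        ∃ γ : ChainSpace, (∀ i, γ.1 i ∈ Set.range e) ∧ ∀ i, g (γ.1 i) = β.1 i := by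
      intro β hβ
      choose u hu using hβ
      have hu' : ∀ i, g (e (u i)) = β.1 i := hu
      have hw : IsChainSeq fun i => e (u i) := by
        intro i
        show e (u i) <+: e (u (i + 1)) ∧ e (u i) ≠ e (u (i + 1))
        have h1 : g (e (u i)) <+: g (e (u (i + 1))) := by
          rw [hu' i, hu' (i + 1)]; exact (β.2 i).1
        refine ⟨(hg _ _).mpr h1, fun hc => (β.2 i).2 ?_⟩
        rw [← hu' i, ← hu' (i + 1), hc]
      exact ⟨⟨_, hw⟩, fun i => ⟨u i, rfl⟩, fun i => hu' i⟩
    rcases hor with hyes | hno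
    · exfalso
      obtain ⟨β, hβ, hnu⟩ := hall k (fun l => g (e l)) hE'
      obtain ⟨γ, hγe, hγg⟩ := htrans β hβ
      have := hyes γ hγe
      rw [Set.mem_setOf_eq] at this
      have heq : (fun i => x (g (γ.1 i))) = fun i => x (β.1 i) :=
        funext fun i => congrArg x (hγg i)
      rw [heq] at this
      exact hnu this
    · refine ⟨fun l => g (e l), hE', hrange, hstem, ?_⟩
      intro β hβ hun
      obtain ⟨γ, hγe, hγg⟩ := htrans β hβ
      refine hno γ hγe ?_
      rw [Set.mem_setOf_eq]
      have heq : (fun i => x (g (γ.1 i))) = fun i => x (β.1 i) :=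
        funext fun i => congrArg x (hγg i)
      rw [heq]
      exact hun
  choose F hF1 hF2 hF3 hF4 using step
  -- iterate
  let Es : ℕ → {f : List Bool → List Bool // IsSubtree f} := fun k =>
    Nat.rec ⟨id, fun s t => Iff.rfl⟩ (fun k p => ⟨F p.1 p.2 k, hF1 p.1 p.2 k⟩) k
  have hmono : ∀ k j : ℕ, k ≤ j → Set.range (Es j).1 ⊆ Set.range (Es k).1 := by
    intro k j h
    induction h with
    | refl => exact subset_rfl
    | step h ih => exact (hF2 _ _ _).trans ih
  set t : ℕ → List Bool := fun k => (Es k).1 [] with htdef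
  have ht : IsChainSeq t := fun k => hF3 (Es k).1 (Es k).2 k
  obtain ⟨n, hn, C, hC, hU⟩ := hsub ⟨t, ht⟩
  set k : ℕ := ⌈C⌉₊ with hk
  have hm : StrictMono fun i : ℕ => n (i + (k + 1)) :=
    fun a b hab => hn (Nat.add_lt_add_right hab _)
  have hw : IsChainSeq fun i => t (n (i + (k + 1))) := ht.subseq hm
  have hvals : ∀ i, (fun i => t (n (i + (k + 1)))) i ∈ Set.range (Es (k + 1)).1 := by
    intro i
    have h1 : k + 1 ≤ n (i + (k + 1)) := le_trans (Nat.le_add_left _ _) hn.le_apply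
    exact hmono (k + 1) (n (i + (k + 1))) h1 ⟨[], rfl⟩
  have hnot := hF4 (Es k).1 (Es k).2 k ⟨_, hw⟩ hvals
  have hU2 : UnconditionalWith C fun i => x (t (n (i + (k + 1)))) := uncond_subseq hU
    (fun a b hab => Nat.add_lt_add_right hab _)
  have hCk : C ≤ (k : ℝ) + 1 := (Nat.le_ceil C).trans (le_add_of_nonneg_right zero_le_one)
  exact hnot (uncond_mono hU2 hCk)
end
end

section
/- Let S be the dyadic tree and suppose (x_s)_{s∈S} is a normalized family in a Banach space X such that for every chain β ∈ C(S) the sequence (x_s)_{s∈β} is weakly null. Assume Stern's theorem for Borel sets of chains, and assume that every normalized weakly null sequence has a (1+ε)-basic subsequence. Then for every ε > 0 there exists a subtree T of S such that for every chain β of T, the sequence (x_s)_{s∈β} is (1+ε)-basic. -/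
open Filter Topology Set

noncomputable section

/-- `y` is `K`-basic: `‖∑_{i<m} a_i y_i‖ ≤ K ‖∑_{i<n} a_i y_i‖` for all `m ≤ n`. -/
def IsKBasic {X : Type*} [NormedAddCommGroup X] [NormedSpace ℝ X]
    (K : ℝ) (y : ℕ → X) : Prop :=
  ∀ m n : ℕ, m ≤ n → ∀ a : ℕ → ℝ,
    ‖∑ i ∈ Finset.range m, a i • y i‖ ≤ K * ‖∑ i ∈ Finset.range n, a i • y i‖

lemma IsChainSeq.prefix_of_le {s : ℕ → List Bool} (hs : IsChainSeq s) :
    ∀ {i j : ℕ}, i ≤ j → s i <+: s j := by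
  intro i j hij
  induction j, hij using Nat.le_induction with
  | base => exact List.prefix_refl _
  | succ j hij ih => exact ih.trans (hs j).1

lemma IsChainSeq.length_strictMono {s : ℕ → List Bool} (hs : IsChainSeq s) :
    StrictMono fun i => (s i).length :=
  strictMono_nat_of_lt_succ fun i =>
    lt_of_le_of_ne (hs i).1.length_le fun h => (hs i).2 ((hs i).1.eq_of_length h)

lemma IsChainSeq.comp {s : ℕ → List Bool} (hs : IsChainSeq s) {nn : ℕ → ℕ}
    (hnn : StrictMono nn) : IsChainSeq fun i => s (nn i) := fun i =>
  ⟨hs.prefix_of_le (hnn (Nat.lt_succ_self i)).le,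
   fun h => absurd (congrArg List.length h)
     (hs.length_strictMono (hnn (Nat.lt_succ_self i))).ne⟩

lemma sum_ite_range {X : Type*} [AddCommMonoid X] [Module ℝ X] (c : ℕ → ℝ) (y : ℕ → X)
    {m n : ℕ} (hmn : m ≤ n) :
    ∑ i ∈ Finset.range n, (if i < m then c i else 0) • y i
      = ∑ i ∈ Finset.range m, c i • y i := by
  rw [← Finset.sum_subset (Finset.range_subset_range.2 hmn)
      (fun j _ hj => by rw [if_neg (by simpa using hj), zero_smul])]
  exact Finset.sum_congr rfl fun j hj => by rw [if_pos (Finset.mem_range.1 hj)]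

/-- The rational test condition characterizes `K`-basicness. -/
lemma ratCond_iff_isKBasic {X : Type*} [NormedAddCommGroup X] [NormedSpace ℝ X]
    (K : ℝ) (y : ℕ → X) :
    (∀ m n : ℕ, m ≤ n → ∀ q : Fin n → ℚ,
      ‖∑ i : Fin n, (if (i : ℕ) < m then (q i : ℝ) else 0) • y i‖ ≤
        K * ‖∑ i : Fin n, (q i : ℝ) • y i‖) ↔ IsKBasic K y := by
  constructor
  · intro h m n hmn a
    set C : Set (Fin n → ℝ) :=
      {c | ‖∑ i : Fin n, (if (i : ℕ) < m then c i else 0) • y i‖ ≤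
        K * ‖∑ i : Fin n, c i • y i‖} with hC
    have hclosed : IsClosed C := by
      apply isClosed_le
      · apply Continuous.norm
        apply continuous_finset_sum
        intro i _
        split_ifs with hi
        · exact (continuous_apply i).smul continuous_const
        · exact continuous_const.smul continuous_const
      · exact continuous_const.mul ((continuous_finset_sum _
          fun i _ => (continuous_apply i).smul continuous_const).norm)
    have hsub : Set.pi Set.univ (fun _ : Fin n => Set.range ((↑) : ℚ → ℝ)) ⊆ C := by
      intro v hv
      choose q hq using fun i => hv i (Set.mem_univ i)
      have hv' : v = fun i => (q i : ℝ) := funext fun i => (hq i).symm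
      rw [hC, Set.mem_setOf_eq, hv']
      exact h m n hmn q
    have hdense : Dense (Set.pi Set.univ (fun _ : Fin n => Set.range ((↑) : ℚ → ℝ))) :=
      dense_pi Set.univ fun _ _ => Rat.denseRange_cast
    have hmem : (fun i : Fin n => a (i : ℕ)) ∈ C :=
      hclosed.closure_subset_iff.2 hsub (hdense _)
    rw [hC, Set.mem_setOf_eq] at hmem
    have e1 : ∑ i : Fin n, (if (i : ℕ) < m then a (i : ℕ) else 0) • y (i : ℕ)
        = ∑ j ∈ Finset.range m, a j • y j :=
      (Fin.sum_univ_eq_sum_range (fun j => (if j < m then a j else 0) • y j) n).trans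
        (sum_ite_range a y hmn)
    have e2 : ∑ i : Fin n, a (i : ℕ) • y (i : ℕ) = ∑ j ∈ Finset.range n, a j • y j :=
      Fin.sum_univ_eq_sum_range (fun j => a j • y j) n
    rw [e1, e2] at hmem
    exact hmem
  · intro hK m n hmn q
    set a : ℕ → ℝ := fun j => if h : j < n then (q ⟨j, h⟩ : ℝ) else 0 with ha
    have key := hK m n hmn a
    have e2 : ∑ i : Fin n, (q i : ℝ) • y (i : ℕ) = ∑ j ∈ Finset.range n, a j • y j := by
      rw [← Fin.sum_univ_eq_sum_range (fun j => a j • y j) n]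
      exact Finset.sum_congr rfl fun i _ => by simp [ha, i.isLt]
    have e1 : ∑ i : Fin n, (if (i : ℕ) < m then (q i : ℝ) else 0) • y (i : ℕ)
        = ∑ j ∈ Finset.range m, a j • y j := by
      rw [← sum_ite_range a y hmn,
        ← Fin.sum_univ_eq_sum_range (fun j => (if j < m then a j else 0) • y j) n]
      exact Finset.sum_congr rfl fun i _ => by simp [ha, i.isLt]
    rw [e1, e2]
    exact key

/-- If `(x_s)_{s∈S}` is normalized and weakly null along every chain then (assuming Stern's
theorem for Borel sets, and that every normalized weakly null sequence has a `(1+ε)`-basic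
subsequence) for every `ε > 0` there is a subtree `T` of `S` such that `(x_s)_{s∈β}` is
`(1+ε)`-basic for every chain `β` of `T`. -/
theorem subtree_basic_sequences
    {X : Type*} [NormedAddCommGroup X] [NormedSpace ℝ X] [CompleteSpace X]
    [TopologicalSpace.SeparableSpace X]
    (x : List Bool → X) (hnorm : ∀ s, ‖x s‖ = 1)
    (hweak : ∀ β : ChainSpace, ∀ f : X →L[ℝ] ℝ,
      Tendsto (fun i => f (x (β.1 i))) atTop (𝓝 0))
    (hStern : ∀ A : Set ChainSpace, MeasurableSet A →
      ∃ e : List Bool → List Bool, IsSubtree e ∧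
        ((∀ β : ChainSpace, (∀ i, β.1 i ∈ Set.range e) → β ∈ A) ∨
         (∀ β : ChainSpace, (∀ i, β.1 i ∈ Set.range e) → β ∉ A)))
    (hsel : ∀ z : ℕ → X, (∀ n, ‖z n‖ = 1) →
      (∀ f : X →L[ℝ] ℝ, Tendsto (fun n => f (z n)) atTop (𝓝 0)) →
      ∀ ε : ℝ, 0 < ε → ∃ n : ℕ → ℕ, StrictMono n ∧ IsKBasic (1 + ε) (fun i => z (n i))) :
    ∀ ε : ℝ, 0 < ε → ∃ e : List Bool → List Bool, IsSubtree e ∧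
      ∀ β : ChainSpace, (∀ i, β.1 i ∈ Set.range e) →
        IsKBasic (1 + ε) (fun i => x (β.1 i)) := by
  intro ε hε
  set K : ℝ := 1 + ε with hKdef
  set A : Set ChainSpace := ⋂ (m : ℕ) (n : ℕ) (_ : m ≤ n) (q : Fin n → ℚ),
    (fun β : ChainSpace => fun i : Fin n => β.1 (i : ℕ)) ⁻¹'
      {v : Fin n → List Bool |
        ‖∑ i : Fin n, (if (i : ℕ) < m then (q i : ℝ) else 0) • x (v i)‖ ≤
          K * ‖∑ i : Fin n, (q i : ℝ) • x (v i)‖} with hA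
  have hmemA : ∀ β : ChainSpace, β ∈ A ↔ IsKBasic K (fun i => x (β.1 i)) := by
    intro β
    rw [← ratCond_iff_isKBasic]
    simp only [hA, Set.mem_iInter, Set.mem_preimage, Set.mem_setOf_eq]
  have hAmeas : MeasurableSet A := by
    rw [hA]
    apply MeasurableSet.iInter; intro m
    apply MeasurableSet.iInter; intro n
    apply MeasurableSet.iInter; intro _
    apply MeasurableSet.iInter; intro q
    have hf : Measurable (fun β : ChainSpace => fun i : Fin n => β.1 (i : ℕ)) :=
      measurable_pi_lambda _ fun i =>
        (measurable_pi_apply ((i : ℕ))).comp measurable_subtype_coe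
    exact hf ((Set.to_countable _).measurableSet)
  obtain ⟨e, he, hd⟩ := hStern A hAmeas
  refine ⟨e, he, ?_⟩
  rcases hd with hpos | hneg
  · intro β hβ
    exact (hmemA β).1 (hpos β hβ)
  · exfalso
    have hchain0 : IsChainSeq (fun i => e (List.replicate i false)) := by
      intro i
      constructor
      · exact (he _ _).1 ⟨[false], by simp [List.replicate_succ']⟩
      · intro hcontra
        simp only [] at hcontra
        have h2 : List.replicate (i + 1) false <+: List.replicate i false :=
          (he _ _).2 (by rw [← hcontra])
        simpa using h2.length_le
    set β0 : ChainSpace := ⟨_, hchain0⟩ with hβ0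
    obtain ⟨nn, hnn, hbasic⟩ := hsel (fun i => x (β0.1 i)) (fun i => hnorm _) (hweak β0) ε hε
    set β' : ChainSpace := ⟨_, hchain0.comp hnn⟩ with hβ'
    have hmem : β' ∈ A := (hmemA β').2 hbasic
    exact hneg β' (fun i => ⟨List.replicate (nn i) false, rfl⟩) hmem
end
end
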